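/- Let g ≥ 1 and let σ : ℂ^g → ℂ be infinitely complex-differentiable. For i ∈ {1,…,g} define the operator D_i acting on infinitely differentiable functions f(u,v,w) of three variables u, v, w ∈ ℂ^g as the determinant expansion D_i = ∂_{v_i}∂²_{w_i} − ∂_{w_i}∂²_{v_i} − ∂_{u_i}∂²_{w_i} + ∂_{w_i}∂²_{u_i} + ∂_{u_i}∂²_{v_i} − ∂_{v_i}∂²_{u_i}. For i, j ∈ {1,…,g} and u with σ(u) ≠ 0, set Ξ_{i,j}(u) = (1/σ(u)³) · (D_i D_j [σ(u)σ(v)σ(w)])|_{w=v=u}. Then for every u with σ(u) ≠ 0, Ξ_{i,j}(u) = 6(℘_{ij}(u)℘_{iijj}(u) − ℘_{iij}(u)℘_{ijj}(u) − 2℘_{ij}(u)³). -/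

import Mathlib

noncomputable section

/-- Partial derivative in the `i`-th coordinate direction. -/
def pd {g : ℕ} (i : Fin g) (f : (Fin g → ℂ) → ℂ) : (Fin g → ℂ) → ℂ :=
  fun u => fderiv ℂ f u (Pi.single i 1)

/-- Iterated partial derivative along a list of coordinate indices. -/
def pdIter {g : ℕ} (l : List (Fin g)) (f : (Fin g → ℂ) → ℂ) : (Fin g → ℂ) → ℂ :=
  l.foldl (fun h i => pd i h) f

/-- The 2-index Kleinian ℘-function ℘_{ij} = (σ_i σ_j − σ σ_{ij}) / σ². -/
def wp2 {g : ℕ} (σ : (Fin g → ℂ) → ℂ) (i j : Fin g) : (Fin g → ℂ) → ℂ :=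
  fun u => (pd i σ u * pd j σ u - σ u * pd j (pd i σ) u) / σ u ^ 2

/-- The m-index Kleinian ℘-function ℘_{i j k₁ ⋯ k_r}, obtained from ℘_{ij} by
successively differentiating with respect to the coordinates in `ks`. -/
def wp {g : ℕ} (σ : (Fin g → ℂ) → ℂ) (i j : Fin g) (ks : List (Fin g)) :
    (Fin g → ℂ) → ℂ :=
  ks.foldl (fun h k => pd k h) (wp2 σ i j)

/-- Partial derivative of a three-variable function in its first argument. -/
def pd3₁ {g : ℕ} (i : Fin g) (F : (Fin g → ℂ) → (Fin g → ℂ) → (Fin g → ℂ) → ℂ) :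
    (Fin g → ℂ) → (Fin g → ℂ) → (Fin g → ℂ) → ℂ :=
  fun u v w => fderiv ℂ (fun x => F x v w) u (Pi.single i 1)

/-- Partial derivative of a three-variable function in its second argument. -/
def pd3₂ {g : ℕ} (i : Fin g) (F : (Fin g → ℂ) → (Fin g → ℂ) → (Fin g → ℂ) → ℂ) :
    (Fin g → ℂ) → (Fin g → ℂ) → (Fin g → ℂ) → ℂ :=
  fun u v w => fderiv ℂ (fun y => F u y w) v (Pi.single i 1)

/-- Partial derivative of a three-variable function in its third argument. -/
def pd3₃ {g : ℕ} (i : Fin g) (F : (Fin g → ℂ) → (Fin g → ℂ) → (Fin g → ℂ) → ℂ) :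
    (Fin g → ℂ) → (Fin g → ℂ) → (Fin g → ℂ) → ℂ :=
  fun u v w => fderiv ℂ (fun z => F u v z) w (Pi.single i 1)

/-- The determinant operator
D_i = ∂_{v_i}∂²_{w_i} − ∂_{w_i}∂²_{v_i} − ∂_{u_i}∂²_{w_i} + ∂_{w_i}∂²_{u_i}
      + ∂_{u_i}∂²_{v_i} − ∂_{v_i}∂²_{u_i}. -/
def Dop {g : ℕ} (i : Fin g) (F : (Fin g → ℂ) → (Fin g → ℂ) → (Fin g → ℂ) → ℂ) :
    (Fin g → ℂ) → (Fin g → ℂ) → (Fin g → ℂ) → ℂ :=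
  fun u v w =>
    pd3₂ i (pd3₃ i (pd3₃ i F)) u v w - pd3₃ i (pd3₂ i (pd3₂ i F)) u v w
      - pd3₁ i (pd3₃ i (pd3₃ i F)) u v w + pd3₃ i (pd3₁ i (pd3₁ i F)) u v w
      + pd3₁ i (pd3₂ i (pd3₂ i F)) u v w - pd3₂ i (pd3₁ i (pd3₁ i F)) u v w

section Helpers

variable {g : ℕ}

lemma pd_contDiff {f : (Fin g → ℂ) → ℂ} (hf : ContDiff ℂ ⊤ f) (k : Fin g) :
    ContDiff ℂ ⊤ (pd k f) :=
  (hf.fderiv_right le_top).clm_apply contDiff_const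

lemma pd_add (k : Fin g) {f h : (Fin g → ℂ) → ℂ} {u} (hf : DifferentiableAt ℂ f u)
    (hh : DifferentiableAt ℂ h u) :
    pd k (fun x => f x + h x) u = pd k f u + pd k h u := by
  simp [pd, fderiv_fun_add hf hh]

lemma pd_sub (k : Fin g) {f h : (Fin g → ℂ) → ℂ} {u} (hf : DifferentiableAt ℂ f u)
    (hh : DifferentiableAt ℂ h u) :
    pd k (fun x => f x - h x) u = pd k f u - pd k h u := by
  simp [pd, fderiv_fun_sub hf hh]

lemma pd_mul (k : Fin g) {f h : (Fin g → ℂ) → ℂ} {u} (hf : DifferentiableAt ℂ f u)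
    (hh : DifferentiableAt ℂ h u) :
    pd k (fun x => f x * h x) u = pd k f u * h u + f u * pd k h u := by
  simp [pd, fderiv_fun_mul hf hh]; ring

lemma pd_const_mul (k : Fin g) {f : (Fin g → ℂ) → ℂ} {u} (c : ℂ)
    (hf : DifferentiableAt ℂ f u) :
    pd k (fun x => c * f x) u = c * pd k f u := by
  simp [pd, fderiv_const_mul hf c]

lemma pd_mul_const (k : Fin g) {f : (Fin g → ℂ) → ℂ} {u} (c : ℂ)
    (hf : DifferentiableAt ℂ f u) :
    pd k (fun x => f x * c) u = pd k f u * c := by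
  simp [pd, fderiv_mul_const hf c]; ring

lemma pd_inv (k : Fin g) {f : (Fin g → ℂ) → ℂ} {u} (hf : DifferentiableAt ℂ f u)
    (hfu : f u ≠ 0) :
    pd k (fun x => (f x)⁻¹) u = -pd k f u / f u ^ 2 := by
  have h1 : HasFDerivAt (fun t : ℂ => t⁻¹)
      (ContinuousLinearMap.smulRight (1 : ℂ →L[ℂ] ℂ) (-(f u ^ 2)⁻¹)) (f u) :=
    hasFDerivAt_inv hfu
  have h2 := h1.comp u hf.hasFDerivAt
  have h3 : fderiv ℂ (fun x => (f x)⁻¹) u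
      = (ContinuousLinearMap.smulRight (1 : ℂ →L[ℂ] ℂ) (-(f u ^ 2)⁻¹)).comp
        (fderiv ℂ f u) := by
    have := h2.fderiv
    exact this
  simp only [pd, h3]
  simp [div_eq_mul_inv]

lemma pd_div (k : Fin g) {f h : (Fin g → ℂ) → ℂ} {u} (hf : DifferentiableAt ℂ f u)
    (hh : DifferentiableAt ℂ h u) (hhu : h u ≠ 0) :
    pd k (fun x => f x / h x) u = (pd k f u * h u - f u * pd k h u) / h u ^ 2 := by
  have e : (fun x => f x / h x) = fun x => f x * (h x)⁻¹ := by
    funext x; rw [div_eq_mul_inv]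
  rw [e, pd_mul k hf (show DifferentiableAt ℂ (fun x => (h x)⁻¹) u from hh.inv hhu), pd_inv k hh hhu]
  field_simp
  ring

lemma pd_sq (k : Fin g) {f : (Fin g → ℂ) → ℂ} {u} (hf : DifferentiableAt ℂ f u) :
    pd k (fun x => f x ^ 2) u = 2 * f u * pd k f u := by
  have e : (fun x => f x ^ 2) = fun x => f x * f x := by funext x; ring
  rw [e, pd_mul k hf hf]; ring

lemma pd_const (k : Fin g) {u : Fin g → ℂ} (c : ℂ) : pd k (fun _ => c) u = 0 := by
  simp [pd]

lemma pd_comm {f : (Fin g → ℂ) → ℂ} (hf : ContDiff ℂ ⊤ f) (a b : Fin g) :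
    pd a (pd b f) = pd b (pd a f) := by
  funext u
  have hsym : IsSymmSndFDerivAt ℂ f u :=
    hf.contDiffAt.isSymmSndFDerivAt le_top
  have hd : DifferentiableAt ℂ (fderiv ℂ f) u :=
    ((hf.fderiv_right (m := 1) le_top).differentiable one_ne_zero) u
  have key : ∀ v w : Fin g → ℂ,
      fderiv ℂ (fun x => fderiv ℂ f x v) u w = fderiv ℂ (fderiv ℂ f) u w v := by
    intro v w
    rw [fderiv_clm_apply hd (differentiableAt_const v)]
    simp
  show fderiv ℂ (fun x => fderiv ℂ f x (Pi.single b 1)) u (Pi.single a 1)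
      = fderiv ℂ (fun x => fderiv ℂ f x (Pi.single a 1)) u (Pi.single b 1)
  rw [key, key]
  exact hsym _ _

lemma pd3TP1 (k : Fin g) {p q r : (Fin g → ℂ) → ℂ} (hp : Differentiable ℂ p) :
    pd3₁ k (fun x y z => p x * q y * r z) = fun x y z => pd k p x * q y * r z := by
  funext a b c
  show pd k (fun x => p x * q b * r c) a = _
  have e : (fun x => p x * q b * r c) = fun x => (q b * r c) * p x := by
    funext t; ring
  rw [e, pd_const_mul k _ (hp.differentiableAt)]
  ring

lemma pd3TP2 (k : Fin g) {p q r : (Fin g → ℂ) → ℂ} (hq : Differentiable ℂ q) :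
    pd3₂ k (fun x y z => p x * q y * r z) = fun x y z => p x * pd k q y * r z := by
  funext a b c
  show pd k (fun y => p a * q y * r c) b = _
  have e : (fun y => p a * q y * r c) = fun y => (p a * r c) * q y := by
    funext t; ring
  rw [e, pd_const_mul k _ (hq.differentiableAt)]
  ring

lemma pd3TP3 (k : Fin g) {p q r : (Fin g → ℂ) → ℂ} (hr : Differentiable ℂ r) :
    pd3₃ k (fun x y z => p x * q y * r z) = fun x y z => p x * q y * pd k r z := by
  funext a b c
  show pd k (fun z => p a * q b * r z) c = _
  have e : (fun z => p a * q b * r z) = fun z => (p a * q b) * r z := by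
    funext t; ring
  rw [e, pd_const_mul k _ (hr.differentiableAt)]

lemma pd3comb1 (k : Fin g) {p1 q1 r1 p2 q2 r2 p3 q3 r3 p4 q4 r4 p5 q5 r5 p6 q6 r6 : (Fin g → ℂ) → ℂ}
    (h1 : Differentiable ℂ p1) (h2 : Differentiable ℂ p2) (h3 : Differentiable ℂ p3) (h4 : Differentiable ℂ p4) (h5 : Differentiable ℂ p5) (h6 : Differentiable ℂ p6) :
    pd3₁ k (fun x y z => p1 x * q1 y * r1 z - p2 x * q2 y * r2 z - p3 x * q3 y * r3 z + p4 x * q4 y * r4 z + p5 x * q5 y * r5 z - p6 x * q6 y * r6 z)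
    = fun x y z => (pd k p1) x * q1 y * r1 z - (pd k p2) x * q2 y * r2 z - (pd k p3) x * q3 y * r3 z + (pd k p4) x * q4 y * r4 z + (pd k p5) x * q5 y * r5 z - (pd k p6) x * q6 y * r6 z := by
  funext a b c
  show pd k (fun x => p1 x * q1 b * r1 c - p2 x * q2 b * r2 c - p3 x * q3 b * r3 c + p4 x * q4 b * r4 c + p5 x * q5 b * r5 c - p6 x * q6 b * r6 c) a = _
  simp (disch := fun_prop) only [pd_sub, pd_add, pd_const_mul, pd_mul_const]

lemma pd3comb2 (k : Fin g) {p1 q1 r1 p2 q2 r2 p3 q3 r3 p4 q4 r4 p5 q5 r5 p6 q6 r6 : (Fin g → ℂ) → ℂ}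
    (h1 : Differentiable ℂ q1) (h2 : Differentiable ℂ q2) (h3 : Differentiable ℂ q3) (h4 : Differentiable ℂ q4) (h5 : Differentiable ℂ q5) (h6 : Differentiable ℂ q6) :
    pd3₂ k (fun x y z => p1 x * q1 y * r1 z - p2 x * q2 y * r2 z - p3 x * q3 y * r3 z + p4 x * q4 y * r4 z + p5 x * q5 y * r5 z - p6 x * q6 y * r6 z)
    = fun x y z => p1 x * (pd k q1) y * r1 z - p2 x * (pd k q2) y * r2 z - p3 x * (pd k q3) y * r3 z + p4 x * (pd k q4) y * r4 z + p5 x * (pd k q5) y * r5 z - p6 x * (pd k q6) y * r6 z := by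
  funext a b c
  show pd k (fun y => p1 a * q1 y * r1 c - p2 a * q2 y * r2 c - p3 a * q3 y * r3 c + p4 a * q4 y * r4 c + p5 a * q5 y * r5 c - p6 a * q6 y * r6 c) b = _
  simp (disch := fun_prop) only [pd_sub, pd_add, pd_const_mul, pd_mul_const]

lemma pd3comb3 (k : Fin g) {p1 q1 r1 p2 q2 r2 p3 q3 r3 p4 q4 r4 p5 q5 r5 p6 q6 r6 : (Fin g → ℂ) → ℂ}
    (h1 : Differentiable ℂ r1) (h2 : Differentiable ℂ r2) (h3 : Differentiable ℂ r3) (h4 : Differentiable ℂ r4) (h5 : Differentiable ℂ r5) (h6 : Differentiable ℂ r6) :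
    pd3₃ k (fun x y z => p1 x * q1 y * r1 z - p2 x * q2 y * r2 z - p3 x * q3 y * r3 z + p4 x * q4 y * r4 z + p5 x * q5 y * r5 z - p6 x * q6 y * r6 z)
    = fun x y z => p1 x * q1 y * (pd k r1) z - p2 x * q2 y * (pd k r2) z - p3 x * q3 y * (pd k r3) z + p4 x * q4 y * (pd k r4) z + p5 x * q5 y * (pd k r5) z - p6 x * q6 y * (pd k r6) z := by
  funext a b c
  show pd k (fun z => p1 a * q1 b * r1 z - p2 a * q2 b * r2 z - p3 a * q3 b * r3 z + p4 a * q4 b * r4 z + p5 a * q5 b * r5 z - p6 a * q6 b * r6 z) c = _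
  simp (disch := fun_prop) only [pd_sub, pd_add, pd_const_mul, pd_mul_const]

end Helpers

/-- the function Ξ_{i,j} = (1/σ(u)³)·(D_iD_j[σ(u)σ(v)σ(w)])|_{w=v=u}
satisfies Ξ_{i,j} = 6(℘_{ij}℘_{iijj} − ℘_{iij}℘_{ijj} − 2℘_{ij}³). -/
theorem statement7 {g : ℕ} (hg : 1 ≤ g) (σ : (Fin g → ℂ) → ℂ)
    (hσ : ContDiff ℂ ⊤ σ) (i j : Fin g) (u : Fin g → ℂ) (hu : σ u ≠ 0) :
    (1 / σ u ^ 3) * Dop i (Dop j (fun x y z => σ x * σ y * σ z)) u u u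
      = 6 * (wp2 σ i j u * wp σ i i [j, j] u - wp σ i i [j] u * wp σ i j [j] u
          - 2 * wp2 σ i j u ^ 3) := by
  have cd_e : ContDiff ℂ ⊤ σ := hσ
  have df_e : Differentiable ℂ (σ) := cd_e.differentiable (by simp)
  have cd_i : ContDiff ℂ ⊤ (pd i σ) := pd_contDiff cd_e i
  have df_i : Differentiable ℂ (pd i σ) := cd_i.differentiable (by simp)
  have cd_j : ContDiff ℂ ⊤ (pd j σ) := pd_contDiff cd_e j
  have df_j : Differentiable ℂ (pd j σ) := cd_j.differentiable (by simp)
  have cd_ii : ContDiff ℂ ⊤ (pd i (pd i σ)) := pd_contDiff cd_i i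
  have df_ii : Differentiable ℂ (pd i (pd i σ)) := cd_ii.differentiable (by simp)
  have cd_ij : ContDiff ℂ ⊤ (pd i (pd j σ)) := pd_contDiff cd_j i
  have df_ij : Differentiable ℂ (pd i (pd j σ)) := cd_ij.differentiable (by simp)
  have cd_ji : ContDiff ℂ ⊤ (pd j (pd i σ)) := pd_contDiff cd_i j
  have df_ji : Differentiable ℂ (pd j (pd i σ)) := cd_ji.differentiable (by simp)
  have cd_jj : ContDiff ℂ ⊤ (pd j (pd j σ)) := pd_contDiff cd_j j
  have df_jj : Differentiable ℂ (pd j (pd j σ)) := cd_jj.differentiable (by simp)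
  have cd_iii : ContDiff ℂ ⊤ (pd i (pd i (pd i σ))) := pd_contDiff cd_ii i
  have df_iii : Differentiable ℂ (pd i (pd i (pd i σ))) := cd_iii.differentiable (by simp)
  have cd_iij : ContDiff ℂ ⊤ (pd i (pd i (pd j σ))) := pd_contDiff cd_ij i
  have df_iij : Differentiable ℂ (pd i (pd i (pd j σ))) := cd_iij.differentiable (by simp)
  have cd_iji : ContDiff ℂ ⊤ (pd i (pd j (pd i σ))) := pd_contDiff cd_ji i
  have df_iji : Differentiable ℂ (pd i (pd j (pd i σ))) := cd_iji.differentiable (by simp)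
  have cd_ijj : ContDiff ℂ ⊤ (pd i (pd j (pd j σ))) := pd_contDiff cd_jj i
  have df_ijj : Differentiable ℂ (pd i (pd j (pd j σ))) := cd_ijj.differentiable (by simp)
  have cd_jii : ContDiff ℂ ⊤ (pd j (pd i (pd i σ))) := pd_contDiff cd_ii j
  have df_jii : Differentiable ℂ (pd j (pd i (pd i σ))) := cd_jii.differentiable (by simp)
  have cd_jij : ContDiff ℂ ⊤ (pd j (pd i (pd j σ))) := pd_contDiff cd_ij j
  have df_jij : Differentiable ℂ (pd j (pd i (pd j σ))) := cd_jij.differentiable (by simp)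
  have cd_jji : ContDiff ℂ ⊤ (pd j (pd j (pd i σ))) := pd_contDiff cd_ji j
  have df_jji : Differentiable ℂ (pd j (pd j (pd i σ))) := cd_jji.differentiable (by simp)
  have cd_jjj : ContDiff ℂ ⊤ (pd j (pd j (pd j σ))) := pd_contDiff cd_jj j
  have df_jjj : Differentiable ℂ (pd j (pd j (pd j σ))) := cd_jjj.differentiable (by simp)
  have cd_iiii : ContDiff ℂ ⊤ (pd i (pd i (pd i (pd i σ)))) := pd_contDiff cd_iii i
  have df_iiii : Differentiable ℂ (pd i (pd i (pd i (pd i σ)))) := cd_iiii.differentiable (by simp)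
  have cd_iiij : ContDiff ℂ ⊤ (pd i (pd i (pd i (pd j σ)))) := pd_contDiff cd_iij i
  have df_iiij : Differentiable ℂ (pd i (pd i (pd i (pd j σ)))) := cd_iiij.differentiable (by simp)
  have cd_iiji : ContDiff ℂ ⊤ (pd i (pd i (pd j (pd i σ)))) := pd_contDiff cd_iji i
  have df_iiji : Differentiable ℂ (pd i (pd i (pd j (pd i σ)))) := cd_iiji.differentiable (by simp)
  have cd_iijj : ContDiff ℂ ⊤ (pd i (pd i (pd j (pd j σ)))) := pd_contDiff cd_ijj i
  have df_iijj : Differentiable ℂ (pd i (pd i (pd j (pd j σ)))) := cd_iijj.differentiable (by simp)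
  have cd_ijii : ContDiff ℂ ⊤ (pd i (pd j (pd i (pd i σ)))) := pd_contDiff cd_jii i
  have df_ijii : Differentiable ℂ (pd i (pd j (pd i (pd i σ)))) := cd_ijii.differentiable (by simp)
  have cd_ijij : ContDiff ℂ ⊤ (pd i (pd j (pd i (pd j σ)))) := pd_contDiff cd_jij i
  have df_ijij : Differentiable ℂ (pd i (pd j (pd i (pd j σ)))) := cd_ijij.differentiable (by simp)
  have cd_ijji : ContDiff ℂ ⊤ (pd i (pd j (pd j (pd i σ)))) := pd_contDiff cd_jji i
  have df_ijji : Differentiable ℂ (pd i (pd j (pd j (pd i σ)))) := cd_ijji.differentiable (by simp)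
  have cd_ijjj : ContDiff ℂ ⊤ (pd i (pd j (pd j (pd j σ)))) := pd_contDiff cd_jjj i
  have df_ijjj : Differentiable ℂ (pd i (pd j (pd j (pd j σ)))) := cd_ijjj.differentiable (by simp)
  have cd_jiii : ContDiff ℂ ⊤ (pd j (pd i (pd i (pd i σ)))) := pd_contDiff cd_iii j
  have df_jiii : Differentiable ℂ (pd j (pd i (pd i (pd i σ)))) := cd_jiii.differentiable (by simp)
  have cd_jiij : ContDiff ℂ ⊤ (pd j (pd i (pd i (pd j σ)))) := pd_contDiff cd_iij j
  have df_jiij : Differentiable ℂ (pd j (pd i (pd i (pd j σ)))) := cd_jiij.differentiable (by simp)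
  have cd_jiji : ContDiff ℂ ⊤ (pd j (pd i (pd j (pd i σ)))) := pd_contDiff cd_iji j
  have df_jiji : Differentiable ℂ (pd j (pd i (pd j (pd i σ)))) := cd_jiji.differentiable (by simp)
  have cd_jijj : ContDiff ℂ ⊤ (pd j (pd i (pd j (pd j σ)))) := pd_contDiff cd_ijj j
  have df_jijj : Differentiable ℂ (pd j (pd i (pd j (pd j σ)))) := cd_jijj.differentiable (by simp)
  have cd_jjii : ContDiff ℂ ⊤ (pd j (pd j (pd i (pd i σ)))) := pd_contDiff cd_jii j
  have df_jjii : Differentiable ℂ (pd j (pd j (pd i (pd i σ)))) := cd_jjii.differentiable (by simp)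
  have cd_jjij : ContDiff ℂ ⊤ (pd j (pd j (pd i (pd j σ)))) := pd_contDiff cd_jij j
  have df_jjij : Differentiable ℂ (pd j (pd j (pd i (pd j σ)))) := cd_jjij.differentiable (by simp)
  have cd_jjji : ContDiff ℂ ⊤ (pd j (pd j (pd j (pd i σ)))) := pd_contDiff cd_jji j
  have df_jjji : Differentiable ℂ (pd j (pd j (pd j (pd i σ)))) := cd_jjji.differentiable (by simp)
  have cd_jjjj : ContDiff ℂ ⊤ (pd j (pd j (pd j (pd j σ)))) := pd_contDiff cd_jjj j
  have df_jjjj : Differentiable ℂ (pd j (pd j (pd j (pd j σ)))) := cd_jjjj.differentiable (by simp)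
  have c1 : pd i (pd j σ) = pd j (pd i σ) := pd_comm cd_e i j
  have c2 : pd i (pd j (pd j σ)) = pd j (pd j (pd i σ)) := by rw [pd_comm cd_j i j, c1]
  have c3 : pd i (pd i (pd j σ)) = pd j (pd i (pd i σ)) := by rw [c1, pd_comm cd_i i j]
  have c4 : pd i (pd i (pd j (pd j σ))) = pd j (pd j (pd i (pd i σ))) := by rw [c2, pd_comm cd_ji i j, pd_comm cd_i i j]
  have hz1 : pd3₃ j (fun x y z => σ x * σ y * σ z) = fun x y z => σ x * σ y * (pd j σ) z := pd3TP3 j df_e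
  have hz2 : pd3₃ j (fun x y z => σ x * σ y * (pd j σ) z) = fun x y z => σ x * σ y * (pd j (pd j σ)) z := pd3TP3 j df_j
  have hz3 : pd3₂ j (fun x y z => σ x * σ y * (pd j (pd j σ)) z) = fun x y z => σ x * (pd j σ) y * (pd j (pd j σ)) z := pd3TP2 j df_e
  have hy1 : pd3₂ j (fun x y z => σ x * σ y * σ z) = fun x y z => σ x * (pd j σ) y * σ z := pd3TP2 j df_e
  have hy2 : pd3₂ j (fun x y z => σ x * (pd j σ) y * σ z) = fun x y z => σ x * (pd j (pd j σ)) y * σ z := pd3TP2 j df_j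
  have hy3 : pd3₃ j (fun x y z => σ x * (pd j (pd j σ)) y * σ z) = fun x y z => σ x * (pd j (pd j σ)) y * (pd j σ) z := pd3TP3 j df_e
  have hz4 : pd3₁ j (fun x y z => σ x * σ y * (pd j (pd j σ)) z) = fun x y z => (pd j σ) x * σ y * (pd j (pd j σ)) z := pd3TP1 j df_e
  have hx1 : pd3₁ j (fun x y z => σ x * σ y * σ z) = fun x y z => (pd j σ) x * σ y * σ z := pd3TP1 j df_e
  have hx2 : pd3₁ j (fun x y z => (pd j σ) x * σ y * σ z) = fun x y z => (pd j (pd j σ)) x * σ y * σ z := pd3TP1 j df_j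
  have hx3 : pd3₃ j (fun x y z => (pd j (pd j σ)) x * σ y * σ z) = fun x y z => (pd j (pd j σ)) x * σ y * (pd j σ) z := pd3TP3 j df_e
  have hy4 : pd3₁ j (fun x y z => σ x * (pd j (pd j σ)) y * σ z) = fun x y z => (pd j σ) x * (pd j (pd j σ)) y * σ z := pd3TP1 j df_e
  have hx4 : pd3₂ j (fun x y z => (pd j (pd j σ)) x * σ y * σ z) = fun x y z => (pd j (pd j σ)) x * (pd j σ) y * σ z := pd3TP2 j df_e
  have hDj : Dop j (fun x y z => σ x * σ y * σ z) = fun x y z => σ x * (pd j σ) y * (pd j (pd j σ)) z - σ x * (pd j (pd j σ)) y * (pd j σ) z - (pd j σ) x * σ y * (pd j (pd j σ)) z + (pd j (pd j σ)) x * σ y * (pd j σ) z + (pd j σ) x * (pd j (pd j σ)) y * σ z - (pd j (pd j σ)) x * (pd j σ) y * σ z := by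
    funext a b c
    simp only [Dop, hz1, hz2, hz3, hy1, hy2, hy3, hz4, hx1, hx2, hx3, hy4, hx4]
  have P1 : pd3₁ i (fun x y z => σ x * (pd j σ) y * (pd j (pd j σ)) z - σ x * (pd j (pd j σ)) y * (pd j σ) z - (pd j σ) x * σ y * (pd j (pd j σ)) z + (pd j (pd j σ)) x * σ y * (pd j σ) z + (pd j σ) x * (pd j (pd j σ)) y * σ z - (pd j (pd j σ)) x * (pd j σ) y * σ z)
      = fun x y z => (pd i σ) x * (pd j σ) y * (pd j (pd j σ)) z - (pd i σ) x * (pd j (pd j σ)) y * (pd j σ) z - (pd i (pd j σ)) x * σ y * (pd j (pd j σ)) z + (pd i (pd j (pd j σ))) x * σ y * (pd j σ) z + (pd i (pd j σ)) x * (pd j (pd j σ)) y * σ z - (pd i (pd j (pd j σ))) x * (pd j σ) y * σ z :=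
    pd3comb1 i df_e df_e df_j df_jj df_j df_jj
  have P11 : pd3₁ i (fun x y z => (pd i σ) x * (pd j σ) y * (pd j (pd j σ)) z - (pd i σ) x * (pd j (pd j σ)) y * (pd j σ) z - (pd i (pd j σ)) x * σ y * (pd j (pd j σ)) z + (pd i (pd j (pd j σ))) x * σ y * (pd j σ) z + (pd i (pd j σ)) x * (pd j (pd j σ)) y * σ z - (pd i (pd j (pd j σ))) x * (pd j σ) y * σ z)
      = fun x y z => (pd i (pd i σ)) x * (pd j σ) y * (pd j (pd j σ)) z - (pd i (pd i σ)) x * (pd j (pd j σ)) y * (pd j σ) z - (pd i (pd i (pd j σ))) x * σ y * (pd j (pd j σ)) z + (pd i (pd i (pd j (pd j σ)))) x * σ y * (pd j σ) z + (pd i (pd i (pd j σ))) x * (pd j (pd j σ)) y * σ z - (pd i (pd i (pd j (pd j σ)))) x * (pd j σ) y * σ z :=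
    pd3comb1 i df_i df_i df_ij df_ijj df_ij df_ijj
  have P2 : pd3₂ i (fun x y z => σ x * (pd j σ) y * (pd j (pd j σ)) z - σ x * (pd j (pd j σ)) y * (pd j σ) z - (pd j σ) x * σ y * (pd j (pd j σ)) z + (pd j (pd j σ)) x * σ y * (pd j σ) z + (pd j σ) x * (pd j (pd j σ)) y * σ z - (pd j (pd j σ)) x * (pd j σ) y * σ z)
      = fun x y z => σ x * (pd i (pd j σ)) y * (pd j (pd j σ)) z - σ x * (pd i (pd j (pd j σ))) y * (pd j σ) z - (pd j σ) x * (pd i σ) y * (pd j (pd j σ)) z + (pd j (pd j σ)) x * (pd i σ) y * (pd j σ) z + (pd j σ) x * (pd i (pd j (pd j σ))) y * σ z - (pd j (pd j σ)) x * (pd i (pd j σ)) y * σ z :=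
    pd3comb2 i df_j df_jj df_e df_e df_jj df_j
  have P22 : pd3₂ i (fun x y z => σ x * (pd i (pd j σ)) y * (pd j (pd j σ)) z - σ x * (pd i (pd j (pd j σ))) y * (pd j σ) z - (pd j σ) x * (pd i σ) y * (pd j (pd j σ)) z + (pd j (pd j σ)) x * (pd i σ) y * (pd j σ) z + (pd j σ) x * (pd i (pd j (pd j σ))) y * σ z - (pd j (pd j σ)) x * (pd i (pd j σ)) y * σ z)
      = fun x y z => σ x * (pd i (pd i (pd j σ))) y * (pd j (pd j σ)) z - σ x * (pd i (pd i (pd j (pd j σ)))) y * (pd j σ) z - (pd j σ) x * (pd i (pd i σ)) y * (pd j (pd j σ)) z + (pd j (pd j σ)) x * (pd i (pd i σ)) y * (pd j σ) z + (pd j σ) x * (pd i (pd i (pd j (pd j σ)))) y * σ z - (pd j (pd j σ)) x * (pd i (pd i (pd j σ))) y * σ z :=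
    pd3comb2 i df_ij df_ijj df_i df_i df_ijj df_ij
  have P3 : pd3₃ i (fun x y z => σ x * (pd j σ) y * (pd j (pd j σ)) z - σ x * (pd j (pd j σ)) y * (pd j σ) z - (pd j σ) x * σ y * (pd j (pd j σ)) z + (pd j (pd j σ)) x * σ y * (pd j σ) z + (pd j σ) x * (pd j (pd j σ)) y * σ z - (pd j (pd j σ)) x * (pd j σ) y * σ z)
      = fun x y z => σ x * (pd j σ) y * (pd i (pd j (pd j σ))) z - σ x * (pd j (pd j σ)) y * (pd i (pd j σ)) z - (pd j σ) x * σ y * (pd i (pd j (pd j σ))) z + (pd j (pd j σ)) x * σ y * (pd i (pd j σ)) z + (pd j σ) x * (pd j (pd j σ)) y * (pd i σ) z - (pd j (pd j σ)) x * (pd j σ) y * (pd i σ) z :=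
    pd3comb3 i df_jj df_j df_jj df_j df_e df_e
  have P33 : pd3₃ i (fun x y z => σ x * (pd j σ) y * (pd i (pd j (pd j σ))) z - σ x * (pd j (pd j σ)) y * (pd i (pd j σ)) z - (pd j σ) x * σ y * (pd i (pd j (pd j σ))) z + (pd j (pd j σ)) x * σ y * (pd i (pd j σ)) z + (pd j σ) x * (pd j (pd j σ)) y * (pd i σ) z - (pd j (pd j σ)) x * (pd j σ) y * (pd i σ) z)
      = fun x y z => σ x * (pd j σ) y * (pd i (pd i (pd j (pd j σ)))) z - σ x * (pd j (pd j σ)) y * (pd i (pd i (pd j σ))) z - (pd j σ) x * σ y * (pd i (pd i (pd j (pd j σ)))) z + (pd j (pd j σ)) x * σ y * (pd i (pd i (pd j σ))) z + (pd j σ) x * (pd j (pd j σ)) y * (pd i (pd i σ)) z - (pd j (pd j σ)) x * (pd j σ) y * (pd i (pd i σ)) z :=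
    pd3comb3 i df_ijj df_ij df_ijj df_ij df_i df_i
  have Q1 : pd3₂ i (fun x y z => σ x * (pd j σ) y * (pd i (pd i (pd j (pd j σ)))) z - σ x * (pd j (pd j σ)) y * (pd i (pd i (pd j σ))) z - (pd j σ) x * σ y * (pd i (pd i (pd j (pd j σ)))) z + (pd j (pd j σ)) x * σ y * (pd i (pd i (pd j σ))) z + (pd j σ) x * (pd j (pd j σ)) y * (pd i (pd i σ)) z - (pd j (pd j σ)) x * (pd j σ) y * (pd i (pd i σ)) z)
      = fun x y z => σ x * (pd i (pd j σ)) y * (pd i (pd i (pd j (pd j σ)))) z - σ x * (pd i (pd j (pd j σ))) y * (pd i (pd i (pd j σ))) z - (pd j σ) x * (pd i σ) y * (pd i (pd i (pd j (pd j σ)))) z + (pd j (pd j σ)) x * (pd i σ) y * (pd i (pd i (pd j σ))) z + (pd j σ) x * (pd i (pd j (pd j σ))) y * (pd i (pd i σ)) z - (pd j (pd j σ)) x * (pd i (pd j σ)) y * (pd i (pd i σ)) z :=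
    pd3comb2 i df_j df_jj df_e df_e df_jj df_j
  have Q2 : pd3₃ i (fun x y z => σ x * (pd i (pd i (pd j σ))) y * (pd j (pd j σ)) z - σ x * (pd i (pd i (pd j (pd j σ)))) y * (pd j σ) z - (pd j σ) x * (pd i (pd i σ)) y * (pd j (pd j σ)) z + (pd j (pd j σ)) x * (pd i (pd i σ)) y * (pd j σ) z + (pd j σ) x * (pd i (pd i (pd j (pd j σ)))) y * σ z - (pd j (pd j σ)) x * (pd i (pd i (pd j σ))) y * σ z)
      = fun x y z => σ x * (pd i (pd i (pd j σ))) y * (pd i (pd j (pd j σ))) z - σ x * (pd i (pd i (pd j (pd j σ)))) y * (pd i (pd j σ)) z - (pd j σ) x * (pd i (pd i σ)) y * (pd i (pd j (pd j σ))) z + (pd j (pd j σ)) x * (pd i (pd i σ)) y * (pd i (pd j σ)) z + (pd j σ) x * (pd i (pd i (pd j (pd j σ)))) y * (pd i σ) z - (pd j (pd j σ)) x * (pd i (pd i (pd j σ))) y * (pd i σ) z :=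
    pd3comb3 i df_jj df_j df_jj df_j df_e df_e
  have Q3 : pd3₁ i (fun x y z => σ x * (pd j σ) y * (pd i (pd i (pd j (pd j σ)))) z - σ x * (pd j (pd j σ)) y * (pd i (pd i (pd j σ))) z - (pd j σ) x * σ y * (pd i (pd i (pd j (pd j σ)))) z + (pd j (pd j σ)) x * σ y * (pd i (pd i (pd j σ))) z + (pd j σ) x * (pd j (pd j σ)) y * (pd i (pd i σ)) z - (pd j (pd j σ)) x * (pd j σ) y * (pd i (pd i σ)) z)
      = fun x y z => (pd i σ) x * (pd j σ) y * (pd i (pd i (pd j (pd j σ)))) z - (pd i σ) x * (pd j (pd j σ)) y * (pd i (pd i (pd j σ))) z - (pd i (pd j σ)) x * σ y * (pd i (pd i (pd j (pd j σ)))) z + (pd i (pd j (pd j σ))) x * σ y * (pd i (pd i (pd j σ))) z + (pd i (pd j σ)) x * (pd j (pd j σ)) y * (pd i (pd i σ)) z - (pd i (pd j (pd j σ))) x * (pd j σ) y * (pd i (pd i σ)) z :=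
    pd3comb1 i df_e df_e df_j df_jj df_j df_jj
  have Q4 : pd3₃ i (fun x y z => (pd i (pd i σ)) x * (pd j σ) y * (pd j (pd j σ)) z - (pd i (pd i σ)) x * (pd j (pd j σ)) y * (pd j σ) z - (pd i (pd i (pd j σ))) x * σ y * (pd j (pd j σ)) z + (pd i (pd i (pd j (pd j σ)))) x * σ y * (pd j σ) z + (pd i (pd i (pd j σ))) x * (pd j (pd j σ)) y * σ z - (pd i (pd i (pd j (pd j σ)))) x * (pd j σ) y * σ z)
      = fun x y z => (pd i (pd i σ)) x * (pd j σ) y * (pd i (pd j (pd j σ))) z - (pd i (pd i σ)) x * (pd j (pd j σ)) y * (pd i (pd j σ)) z - (pd i (pd i (pd j σ))) x * σ y * (pd i (pd j (pd j σ))) z + (pd i (pd i (pd j (pd j σ)))) x * σ y * (pd i (pd j σ)) z + (pd i (pd i (pd j σ))) x * (pd j (pd j σ)) y * (pd i σ) z - (pd i (pd i (pd j (pd j σ)))) x * (pd j σ) y * (pd i σ) z :=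
    pd3comb3 i df_jj df_j df_jj df_j df_e df_e
  have Q5 : pd3₁ i (fun x y z => σ x * (pd i (pd i (pd j σ))) y * (pd j (pd j σ)) z - σ x * (pd i (pd i (pd j (pd j σ)))) y * (pd j σ) z - (pd j σ) x * (pd i (pd i σ)) y * (pd j (pd j σ)) z + (pd j (pd j σ)) x * (pd i (pd i σ)) y * (pd j σ) z + (pd j σ) x * (pd i (pd i (pd j (pd j σ)))) y * σ z - (pd j (pd j σ)) x * (pd i (pd i (pd j σ))) y * σ z)
      = fun x y z => (pd i σ) x * (pd i (pd i (pd j σ))) y * (pd j (pd j σ)) z - (pd i σ) x * (pd i (pd i (pd j (pd j σ)))) y * (pd j σ) z - (pd i (pd j σ)) x * (pd i (pd i σ)) y * (pd j (pd j σ)) z + (pd i (pd j (pd j σ))) x * (pd i (pd i σ)) y * (pd j σ) z + (pd i (pd j σ)) x * (pd i (pd i (pd j (pd j σ)))) y * σ z - (pd i (pd j (pd j σ))) x * (pd i (pd i (pd j σ))) y * σ z :=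
    pd3comb1 i df_e df_e df_j df_jj df_j df_jj
  have Q6 : pd3₂ i (fun x y z => (pd i (pd i σ)) x * (pd j σ) y * (pd j (pd j σ)) z - (pd i (pd i σ)) x * (pd j (pd j σ)) y * (pd j σ) z - (pd i (pd i (pd j σ))) x * σ y * (pd j (pd j σ)) z + (pd i (pd i (pd j (pd j σ)))) x * σ y * (pd j σ) z + (pd i (pd i (pd j σ))) x * (pd j (pd j σ)) y * σ z - (pd i (pd i (pd j (pd j σ)))) x * (pd j σ) y * σ z)
      = fun x y z => (pd i (pd i σ)) x * (pd i (pd j σ)) y * (pd j (pd j σ)) z - (pd i (pd i σ)) x * (pd i (pd j (pd j σ))) y * (pd j σ) z - (pd i (pd i (pd j σ))) x * (pd i σ) y * (pd j (pd j σ)) z + (pd i (pd i (pd j (pd j σ)))) x * (pd i σ) y * (pd j σ) z + (pd i (pd i (pd j σ))) x * (pd i (pd j (pd j σ))) y * σ z - (pd i (pd i (pd j (pd j σ)))) x * (pd i (pd j σ)) y * σ z :=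
    pd3comb2 i df_j df_jj df_e df_e df_jj df_j
  have key1 : ∀ x, σ x ≠ 0 → pd j (wp2 σ i i) x = (((pd j (pd i σ)) x * (pd i σ) x + (pd i σ) x * (pd j (pd i σ)) x - ((pd j σ) x * (pd i (pd i σ)) x + σ x * (pd j (pd i (pd i σ))) x)) * σ x ^ 2 - ((pd i σ) x * (pd i σ) x - σ x * (pd i (pd i σ)) x) * (2 * σ x * (pd j σ) x)) / (σ x ^ 2) ^ 2 := by
    intro x hx
    have d1 : DifferentiableAt ℂ (fun t => pd i σ t * pd i σ t - σ t * (pd i (pd i σ)) t) x := by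
      fun_prop
    have d2 : DifferentiableAt ℂ (fun t : Fin g → ℂ => σ t ^ 2) x := by fun_prop
    show pd j (fun t => (pd i σ t * pd i σ t - σ t * (pd i (pd i σ)) t) / σ t ^ 2) x = _
    rw [pd_div j d1 d2 (pow_ne_zero 2 hx)]
    simp (disch := fun_prop) only [pd_sub, pd_add, pd_mul, pd_sq, pd_const]
  have key2 : ∀ x, σ x ≠ 0 → pd j (wp2 σ i j) x = (((pd j (pd i σ)) x * (pd j σ) x + (pd i σ) x * (pd j (pd j σ)) x - ((pd j σ) x * (pd j (pd i σ)) x + σ x * (pd j (pd j (pd i σ))) x)) * σ x ^ 2 - ((pd i σ) x * (pd j σ) x - σ x * (pd j (pd i σ)) x) * (2 * σ x * (pd j σ) x)) / (σ x ^ 2) ^ 2 := by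
    intro x hx
    have d1 : DifferentiableAt ℂ (fun t => pd i σ t * pd j σ t - σ t * (pd j (pd i σ)) t) x := by
      fun_prop
    have d2 : DifferentiableAt ℂ (fun t : Fin g → ℂ => σ t ^ 2) x := by fun_prop
    show pd j (fun t => (pd i σ t * pd j σ t - σ t * (pd j (pd i σ)) t) / σ t ^ 2) x = _
    rw [pd_div j d1 d2 (pow_ne_zero 2 hx)]
    simp (disch := fun_prop) only [pd_sub, pd_add, pd_mul, pd_sq, pd_const]
  have hne : ∀ᶠ x in nhds u, σ x ≠ 0 := hσ.continuous.continuousAt.eventually_ne hu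
  have ev : pd j (wp2 σ i i) =ᶠ[nhds u] (fun x => (((pd j (pd i σ)) x * (pd i σ) x + (pd i σ) x * (pd j (pd i σ)) x - ((pd j σ) x * (pd i (pd i σ)) x + σ x * (pd j (pd i (pd i σ))) x)) * σ x ^ 2 - ((pd i σ) x * (pd i σ) x - σ x * (pd i (pd i σ)) x) * (2 * σ x * (pd j σ) x)) / (σ x ^ 2) ^ 2) := by
    filter_upwards [hne] with x hx
    exact key1 x hx
  have e1 : wp σ i i [j, j] u = pd j (fun x => (((pd j (pd i σ)) x * (pd i σ) x + (pd i σ) x * (pd j (pd i σ)) x - ((pd j σ) x * (pd i (pd i σ)) x + σ x * (pd j (pd i (pd i σ))) x)) * σ x ^ 2 - ((pd i σ) x * (pd i σ) x - σ x * (pd i (pd i σ)) x) * (2 * σ x * (pd j σ) x)) / (σ x ^ 2) ^ 2) u := by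
    show fderiv ℂ (pd j (wp2 σ i i)) u (Pi.single j 1) = fderiv ℂ (fun x => (((pd j (pd i σ)) x * (pd i σ) x + (pd i σ) x * (pd j (pd i σ)) x - ((pd j σ) x * (pd i (pd i σ)) x + σ x * (pd j (pd i (pd i σ))) x)) * σ x ^ 2 - ((pd i σ) x * (pd i σ) x - σ x * (pd i (pd i σ)) x) * (2 * σ x * (pd j σ) x)) / (σ x ^ 2) ^ 2) u (Pi.single j 1)
    rw [ev.fderiv_eq]
  have e2 : wp σ i i [j] u = (((pd j (pd i σ)) u * (pd i σ) u + (pd i σ) u * (pd j (pd i σ)) u - ((pd j σ) u * (pd i (pd i σ)) u + σ u * (pd j (pd i (pd i σ))) u)) * σ u ^ 2 - ((pd i σ) u * (pd i σ) u - σ u * (pd i (pd i σ)) u) * (2 * σ u * (pd j σ) u)) / (σ u ^ 2) ^ 2 := key1 u hu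
  have e3 : wp σ i j [j] u = (((pd j (pd i σ)) u * (pd j σ) u + (pd i σ) u * (pd j (pd j σ)) u - ((pd j σ) u * (pd j (pd i σ)) u + σ u * (pd j (pd j (pd i σ))) u)) * σ u ^ 2 - ((pd i σ) u * (pd j σ) u - σ u * (pd j (pd i σ)) u) * (2 * σ u * (pd j σ) u)) / (σ u ^ 2) ^ 2 := key2 u hu
  have hN1d : DifferentiableAt ℂ (fun x => (((pd j (pd i σ)) x * (pd i σ) x + (pd i σ) x * (pd j (pd i σ)) x - ((pd j σ) x * (pd i (pd i σ)) x + σ x * (pd j (pd i (pd i σ))) x)) * σ x ^ 2 - ((pd i σ) x * (pd i σ) x - σ x * (pd i (pd i σ)) x) * (2 * σ x * (pd j σ) x))) u := by fun_prop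
  have hdend : DifferentiableAt ℂ (fun x : Fin g → ℂ => (σ x ^ 2) ^ 2) u := by fun_prop
  rw [hDj]
  simp only [Dop]
  simp only [P3, P33, Q1, P2, P22, Q2, P1, P11, Q3, Q4, Q5, Q6]
  rw [e1, e2, e3]
  rw [pd_div j hN1d hdend (pow_ne_zero 2 (pow_ne_zero 2 hu))]
  simp (disch := fun_prop) only [pd_sub, pd_add, pd_mul, pd_sq, pd_const_mul, pd_mul_const, pd_const]
  simp only [wp2]
  simp only [c4]; simp only [c3]; simp only [c2]; simp only [c1]
  field_simp [hu]
  ring
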